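/- Let δ ∈ (0,1), N > δ, and ρ > 0. Define F(s) = (t/√s)·exp(-t²/(4s))·(√s/ρ)^δ·(1 + √s/ρ)^{-N} for s, t > 0. Then there is C = C(δ, N) such that ∫_0^∞ F(s) ds/s ≤ C (t/ρ)^δ (1 + t/ρ)^{-N} for all t > 0. -/

import Mathlib

open Real MeasureTheory Set

-- integrability of u^β e^{-1/u} on (0,∞), β < -1
lemma int_aux {β : ℝ} (hβ : β < -1) :
    IntegrableOn (fun u : ℝ => u ^ β * Real.exp (-1/u)) (Ioi 0) := by
  have hs : (0:ℝ) < -β - 1 := by linarith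
  have h0 := Real.GammaIntegral_convergent hs
  have h1 := (integrableOn_Ioi_comp_rpow_iff' (fun x => Real.exp (-x) * x ^ (-β-1-1))
      (p := -1) (by norm_num)).mpr h0
  refine h1.congr_fun (fun x hx => ?_) measurableSet_Ioi
  have hx' : (0:ℝ) < x := hx
  dsimp only
  rw [smul_eq_mul, Real.rpow_neg_one, Real.inv_rpow hx'.le, ← Real.rpow_neg hx'.le]
  have h2 : x ^ ((-1:ℝ) - 1) * (Real.exp (-x⁻¹) * x ^ (-(-β - 1 - 1)))
      = (x ^ ((-1:ℝ)-1) * x ^ (-(-β-1-1))) * Real.exp (-x⁻¹) := by ring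
  rw [h2, ← Real.rpow_add hx']
  norm_num
  rw [show (-2:ℝ) + (1 - (-β - 1)) = β by ring, neg_div, one_div]

lemma psi_int {α : ℝ} (hα : α < 1) :
    IntegrableOn (fun u : ℝ => u ^ ((α-3)/2) * Real.exp (-1/(4*u))) (Ioi 0) := by
  have hβ : (α-3)/2 < -1 := by linarith
  have h := int_aux hβ
  have h2 := (integrableOn_Ioi_comp_mul_left_iff
      (fun x : ℝ => x ^ ((α-3)/2) * Real.exp (-1/x)) 0 (a := 4) (by norm_num)).mpr
      (by simpa using h)
  have h3 : IntegrableOn (fun x : ℝ => (4:ℝ) ^ (-((α-3)/2)) *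
      ((4*x) ^ ((α-3)/2) * Real.exp (-1/(4*x)))) (Ioi 0) := h2.const_mul _
  refine h3.congr_fun (fun x hx => ?_) measurableSet_Ioi
  have hx' : (0:ℝ) < x := hx
  dsimp only
  rw [Real.mul_rpow (by norm_num) hx'.le,
    show (4:ℝ)^(-((α-3)/2)) * ((4:ℝ)^((α-3)/2) * x^((α-3)/2) * Real.exp (-1/(4*x)))
      = ((4:ℝ)^(-((α-3)/2)) * (4:ℝ)^((α-3)/2)) * (x^((α-3)/2) * Real.exp (-1/(4*x))) by ring,
    ← Real.rpow_add (by norm_num : (0:ℝ) < 4)]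
  norm_num

lemma pow_part {α u : ℝ} (hu : 0 < u) :
    (Real.sqrt u)⁻¹ * (Real.sqrt u) ^ α / u = u ^ ((α-3)/2) := by
  rw [show (α-3)/2 = (-(1/2)) + ((1/2)*α + (-1)) by ring, Real.rpow_add hu, Real.rpow_add hu,
    Real.rpow_neg hu.le, Real.rpow_neg_one, Real.rpow_mul hu.le, ← Real.sqrt_eq_rpow]
  ring

lemma phi_eq {α t s : ℝ} (ht : 0 < t) (hs : 0 < s) :
    (t / Real.sqrt s) * Real.exp (-t^2/(4*s)) * (Real.sqrt s / t) ^ α / s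
      = (t^2)⁻¹ * (((t^2)⁻¹*s) ^ ((α-3)/2) * Real.exp (-1/(4*((t^2)⁻¹*s)))) := by
  have ht2 : (0:ℝ) < t^2 := by positivity
  set u := (t^2)⁻¹ * s with hu_def
  have hu : 0 < u := by positivity
  have hsu : s = t^2 * u := by rw [hu_def]; field_simp
  have hsqrt : Real.sqrt s = t * Real.sqrt u := by
    rw [hsu, Real.sqrt_mul (by positivity), Real.sqrt_sq ht.le]
  have hexp : -t^2/(4*s) = -1/(4*u) := by rw [hsu]; field_simp
  rw [hexp, hsqrt, hsu]
  have hsqu : (0:ℝ) < Real.sqrt u := Real.sqrt_pos.mpr hu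
  have h1 : t/(t*Real.sqrt u) = (Real.sqrt u)⁻¹ := by field_simp
  have h2' : t * Real.sqrt u / t = Real.sqrt u := by
    rw [mul_comm, mul_div_assoc, div_self ht.ne', mul_one]
  rw [h1, h2']
  rw [← pow_part (α := α) hu]
  field_simp

lemma phi_int {α t : ℝ} (hα : α < 1) (ht : 0 < t) :
    IntegrableOn (fun s => (t / Real.sqrt s) * Real.exp (-t^2/(4*s)) * (Real.sqrt s / t) ^ α / s)
      (Ioi 0) := by
  have ht2 : (0:ℝ) < (t^2)⁻¹ := by positivity
  have h := (integrableOn_Ioi_comp_mul_left_iff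
      (fun u : ℝ => u ^ ((α-3)/2) * Real.exp (-1/(4*u))) 0 ht2).mpr (by simpa using psi_int hα)
  have h2 : IntegrableOn (fun s : ℝ => (t^2)⁻¹ *
      (((t^2)⁻¹*s) ^ ((α-3)/2) * Real.exp (-1/(4*((t^2)⁻¹*s))))) (Ioi 0) := h.const_mul _
  exact h2.congr_fun (fun s hs => (phi_eq ht hs).symm) measurableSet_Ioi

lemma phi_val {α t : ℝ} (ht : 0 < t) :
    ∫ s in Ioi 0, (t / Real.sqrt s) * Real.exp (-t^2/(4*s)) * (Real.sqrt s / t) ^ α / s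
      = ∫ u in Ioi 0, u ^ ((α-3)/2) * Real.exp (-1/(4*u)) := by
  have ht2 : (0:ℝ) < (t^2)⁻¹ := by positivity
  have ht2' : (0:ℝ) < t^2 := by positivity
  calc ∫ s in Ioi 0, (t / Real.sqrt s) * Real.exp (-t^2/(4*s)) * (Real.sqrt s / t) ^ α / s
      = ∫ s in Ioi 0, (t^2)⁻¹ *
          (((t^2)⁻¹*s) ^ ((α-3)/2) * Real.exp (-1/(4*((t^2)⁻¹*s)))) :=
        setIntegral_congr_fun measurableSet_Ioi (fun s hs => phi_eq ht hs)
    _ = (t^2)⁻¹ * ∫ s in Ioi 0,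
          ((t^2)⁻¹*s) ^ ((α-3)/2) * Real.exp (-1/(4*((t^2)⁻¹*s))) := integral_const_mul _ _
    _ = (t^2)⁻¹ * (((t^2)⁻¹)⁻¹ • ∫ u in Ioi ((t^2)⁻¹*0),
          u ^ ((α-3)/2) * Real.exp (-1/(4*u))) := by
        rw [integral_comp_mul_left_Ioi (fun u => u ^ ((α-3)/2) * Real.exp (-1/(4*u))) 0 ht2]
    _ = ∫ u in Ioi 0, u ^ ((α-3)/2) * Real.exp (-1/(4*u)) := by
        rw [mul_zero, inv_inv, smul_eq_mul, ← mul_assoc, inv_mul_cancel₀ ht2'.ne', one_mul]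

lemma ratio_bound {δ N a b : ℝ} (hδ0 : 0 < δ) (hN : δ < N) (ha : 0 < a) (hb : 0 < b) :
    a ^ δ * (1+a) ^ (-N) ≤ b ^ δ * (1+b) ^ (-N) * ((a/b) ^ δ + (a/b) ^ (δ-N)) := by
  have h1a : (0:ℝ) < 1 + a := by linarith
  have h1b : (0:ℝ) < 1 + b := by linarith
  have hN0 : (0:ℝ) < N := by linarith
  rcases le_total a b with h | h
  · have e1 : a ^ δ * (1+a) ^ (-N) = (a ^ N * (1+a) ^ (-N)) * a ^ (δ-N) := by
      rw [mul_right_comm, ← Real.rpow_add ha]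
      norm_num
    have e2 : b ^ δ * (1+b) ^ (-N) * (a/b) ^ (δ-N) = (b ^ N * (1+b) ^ (-N)) * a ^ (δ-N) := by
      rw [Real.div_rpow ha.le hb.le]
      rw [show b ^ δ * (1+b) ^ (-N) * (a ^ (δ-N) / b ^ (δ-N))
        = (b ^ δ / b ^ (δ-N)) * (1+b) ^ (-N) * a ^ (δ-N) by ring, ← Real.rpow_sub hb]
      norm_num
    have hmono : a ^ N * (1+a) ^ (-N) ≤ b ^ N * (1+b) ^ (-N) := by
      have ea : a ^ N * (1+a) ^ (-N) = (a/(1+a)) ^ N := by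
        rw [Real.div_rpow ha.le h1a.le, Real.rpow_neg h1a.le, div_eq_mul_inv]
      have eb : b ^ N * (1+b) ^ (-N) = (b/(1+b)) ^ N := by
        rw [Real.div_rpow hb.le h1b.le, Real.rpow_neg h1b.le, div_eq_mul_inv]
      rw [ea, eb]
      refine Real.rpow_le_rpow (by positivity) ?_ hN0.le
      rw [div_le_div_iff₀ h1a h1b]
      nlinarith
    have key : a ^ δ * (1+a) ^ (-N) ≤ b ^ δ * (1+b) ^ (-N) * (a/b) ^ (δ-N) := by
      rw [e1, e2]
      exact mul_le_mul_of_nonneg_right hmono (Real.rpow_nonneg ha.le _)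
    rw [mul_add]
    exact key.trans (le_add_of_nonneg_left (by positivity))
  · have key : a ^ δ * (1+a) ^ (-N) ≤ b ^ δ * (1+b) ^ (-N) * (a/b) ^ δ := by
      have e2 : b ^ δ * (1+b) ^ (-N) * (a/b) ^ δ = a ^ δ * (1+b) ^ (-N) := by
        rw [Real.div_rpow ha.le hb.le]
        field_simp
      rw [e2]
      exact mul_le_mul_of_nonneg_left
        (Real.rpow_le_rpow_of_nonpos h1b (by linarith) (by linarith))
        (Real.rpow_nonneg ha.le δ)
    rw [mul_add]
    exact key.trans (le_add_of_nonneg_right (by positivity))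

theorem stmt10 (δ N : ℝ) (hδ0 : 0 < δ) (hδ1 : δ < 1) (hN : δ < N) :
    ∃ C > (0:ℝ), ∀ ρ t : ℝ, 0 < ρ → 0 < t →
      (∫ s in Set.Ioi (0:ℝ),
        (t / Real.sqrt s) * Real.exp (-t^2 / (4*s)) * (Real.sqrt s / ρ) ^ δ *
          (1 + Real.sqrt s / ρ) ^ (-N) / s) ≤
        C * (t / ρ) ^ δ * (1 + t / ρ) ^ (-N) := by
  set J1 := ∫ u in Ioi (0:ℝ), u ^ ((δ-3)/2) * Real.exp (-1/(4*u)) with hJ1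
  set J2 := ∫ u in Ioi (0:ℝ), u ^ ((δ-N-3)/2) * Real.exp (-1/(4*u)) with hJ2
  have hJ1nn : 0 ≤ J1 := setIntegral_nonneg measurableSet_Ioi (fun u hu => by
    have : (0:ℝ) < u := hu; positivity)
  have hJ2nn : 0 ≤ J2 := setIntegral_nonneg measurableSet_Ioi (fun u hu => by
    have : (0:ℝ) < u := hu; positivity)
  refine ⟨J1 + J2 + 1, by linarith, fun ρ t hρ ht => ?_⟩
  set K := (t/ρ) ^ δ * (1 + t/ρ) ^ (-N) with hK
  have hKpos : 0 < K := by positivity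
  have hInt1 := phi_int (α := δ) hδ1 ht
  have hInt2 := phi_int (α := δ - N) (by linarith) ht
  have hGint : IntegrableOn (fun s => K *
      ((t / Real.sqrt s) * Real.exp (-t^2/(4*s)) * (Real.sqrt s / t) ^ δ / s +
       (t / Real.sqrt s) * Real.exp (-t^2/(4*s)) * (Real.sqrt s / t) ^ (δ-N) / s)) (Ioi 0) :=
    (hInt1.add hInt2).const_mul K
  have hmono : (∫ s in Set.Ioi (0:ℝ),
        (t / Real.sqrt s) * Real.exp (-t^2 / (4*s)) * (Real.sqrt s / ρ) ^ δ *
          (1 + Real.sqrt s / ρ) ^ (-N) / s) ≤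
      ∫ s in Ioi (0:ℝ), K *
        ((t / Real.sqrt s) * Real.exp (-t^2/(4*s)) * (Real.sqrt s / t) ^ δ / s +
         (t / Real.sqrt s) * Real.exp (-t^2/(4*s)) * (Real.sqrt s / t) ^ (δ-N) / s) := by
    refine integral_mono_of_nonneg ?_ hGint ?_
    · refine (ae_restrict_iff' measurableSet_Ioi).mpr (Filter.Eventually.of_forall fun s hs => ?_)
      have hs' : (0:ℝ) < s := hs
      have : (0:ℝ) < Real.sqrt s := Real.sqrt_pos.mpr hs'
      positivity
    · refine (ae_restrict_iff' measurableSet_Ioi).mpr (Filter.Eventually.of_forall fun s hs => ?_)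
      have hs' : (0:ℝ) < s := hs
      have hsq : (0:ℝ) < Real.sqrt s := Real.sqrt_pos.mpr hs'
      have hab : (Real.sqrt s / ρ) / (t / ρ) = Real.sqrt s / t := by
        field_simp
      have hR := ratio_bound hδ0 hN (a := Real.sqrt s / ρ) (b := t / ρ)
        (by positivity) (by positivity)
      rw [hab] at hR
      calc (t / Real.sqrt s) * Real.exp (-t^2 / (4*s)) * (Real.sqrt s / ρ) ^ δ *
            (1 + Real.sqrt s / ρ) ^ (-N) / s
          = ((t / Real.sqrt s) * Real.exp (-t^2 / (4*s)) / s) *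
            ((Real.sqrt s / ρ) ^ δ * (1 + Real.sqrt s / ρ) ^ (-N)) := by ring
        _ ≤ ((t / Real.sqrt s) * Real.exp (-t^2 / (4*s)) / s) *
            (K * ((Real.sqrt s / t) ^ δ + (Real.sqrt s / t) ^ (δ-N))) := by
            refine mul_le_mul_of_nonneg_left hR (by positivity)
        _ = K * ((t / Real.sqrt s) * Real.exp (-t^2/(4*s)) * (Real.sqrt s / t) ^ δ / s +
             (t / Real.sqrt s) * Real.exp (-t^2/(4*s)) * (Real.sqrt s / t) ^ (δ-N) / s) := by
            ring
  have hGval : (∫ s in Ioi (0:ℝ), K *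
        ((t / Real.sqrt s) * Real.exp (-t^2/(4*s)) * (Real.sqrt s / t) ^ δ / s +
         (t / Real.sqrt s) * Real.exp (-t^2/(4*s)) * (Real.sqrt s / t) ^ (δ-N) / s))
      = K * (J1 + J2) := by
    rw [integral_const_mul, integral_add hInt1 hInt2, phi_val (α := δ) ht,
      phi_val (α := δ - N) ht]
  rw [hGval] at hmono
  have hfin : K * (J1 + J2) ≤ (J1 + J2 + 1) * K := by nlinarith
  calc _ ≤ K * (J1 + J2) := hmono
    _ ≤ (J1 + J2 + 1) * K := hfin
    _ = (J1 + J2 + 1) * (t/ρ) ^ δ * (1 + t/ρ) ^ (-N) := by rw [hK, mul_assoc]
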